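/- Let ψ(p) = E_{p^S}[f(X)] be the expectation of a performance function f over the S-fold product of a discrete distribution p = (p_1,…,p_m) on points {z_1,…,z_m}, and define the mixture path p_ε = (1−ε)p + ε·1_i where 1_i is the point mass at z_i. If all p_i > 0, then the one-sided derivative d/dε ψ(p_ε)|_{ε=0+} equals E_{p^S}[f(X)·S_i(X; p)] where the score function S_i(x; p) = Σ_{t=1}^S (𝟙{x_t = z_i}/p_i) − S. -/

import Mathlib

open scoped BigOperators

/-- Score-function (Gateaux) derivative of a product-measure expectation: with
`ψ(p) = E_{p^S}[f(X)]` over the `S`-fold product of the discrete distribution `p`, and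
mixture path `p_ε = (1-ε) p + ε 1_i`, the one-sided derivative at `ε = 0+` is
`E_{p^S}[f(X) S_i(X; p)]` where `S_i(x; p) = Σ_t 1{x_t = i}/p_i - S`. -/
theorem stmt12 {m S : ℕ} (p : Fin m → ℝ) (hp : ∀ i, 0 < p i) (hp1 : ∑ i, p i = 1)
    (f : (Fin S → Fin m) → ℝ) (i : Fin m) :
    HasDerivWithinAt
      (fun ε : ℝ => ∑ x : Fin S → Fin m,
        (∏ t, ((1 - ε) * p (x t) + ε * (if x t = i then 1 else 0))) * f x)
      (∑ x : Fin S → Fin m, (∏ t, p (x t)) *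
        (f x * ((∑ t : Fin S, (if x t = i then 1 / p i else 0)) - (S : ℝ))))
      (Set.Ici 0) 0 := by
  have key : ∀ x : Fin S → Fin m,
      HasDerivAt (fun ε : ℝ =>
        (∏ t, ((1 - ε) * p (x t) + ε * (if x t = i then 1 else 0))) * f x)
        ((∏ t, p (x t)) *
          (f x * ((∑ t : Fin S, (if x t = i then 1 / p i else 0)) - (S : ℝ)))) 0 := by
    intro x
    have hprod : HasDerivAt (fun ε : ℝ =>
        ∏ t, ((1 - ε) * p (x t) + ε * (if x t = i then 1 else 0)))
        (∑ t : Fin S, (∏ s ∈ Finset.univ.erase t,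
          ((1 - (0:ℝ)) * p (x s) + 0 * (if x s = i then 1 else 0))) •
          ((if x t = i then 1 else 0) - p (x t))) 0 := by
      apply HasDerivAt.fun_finsetProd
      intro t _
      have h1 : HasDerivAt (fun ε : ℝ => (1 - ε) * p (x t))
          (-1 * p (x t)) 0 := by
        exact (((hasDerivAt_id (0:ℝ)).const_sub 1).mul_const _)
      have h2 : HasDerivAt (fun ε : ℝ => ε * (if x t = i then (1:ℝ) else 0))
          (if x t = i then 1 else 0) 0 := by
        simpa using (hasDerivAt_id (0:ℝ)).mul_const (if x t = i then (1:ℝ) else 0)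
      simpa [sub_eq_neg_add, neg_mul] using h1.fun_add h2
    have heq : (∑ t : Fin S, (∏ s ∈ Finset.univ.erase t,
          ((1 - (0:ℝ)) * p (x s) + 0 * (if x s = i then 1 else 0))) •
          ((if x t = i then 1 else 0) - p (x t))) * f x
        = (∏ t, p (x t)) *
          (f x * ((∑ t : Fin S, (if x t = i then 1 / p i else 0)) - (S : ℝ))) := by
      have hterm : ∀ t : Fin S,
          (∏ s ∈ Finset.univ.erase t, p (x s)) *
            ((if x t = i then (1:ℝ) else 0) - p (x t))
          = (∏ s, p (x s)) * ((if x t = i then 1 / p i else 0) - 1) := by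
        intro t
        have hmul : (∏ s ∈ Finset.univ.erase t, p (x s)) * p (x t) = ∏ s, p (x s) :=
          Finset.prod_erase_mul _ _ (Finset.mem_univ t)
        by_cases h : x t = i
        · simp only [h, if_true]
          have hpi : p i ≠ 0 := (hp i).ne'
          rw [← hmul, h]
          field_simp
        · simp only [h, if_false]
          rw [← hmul]; ring
      simp only [smul_eq_mul, one_mul, zero_mul, sub_zero, add_zero]
      rw [Finset.sum_congr rfl (fun t _ => hterm t), ← Finset.mul_sum,
        Finset.sum_sub_distrib]
      simp only [Finset.sum_const, Finset.card_univ, Fintype.card_fin, nsmul_eq_mul,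
        mul_one]
      ring
    have := hprod.mul_const (f x)
    rw [heq] at this
    exact this
  exact (HasDerivAt.fun_sum (fun x _ => key x)).hasDerivWithinAt
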